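/- For every finite connected simple graph G and every vertex r of G, there exists a spanning tree T of G rooted at r, together with a linear order on the children of each vertex, such that T is an uncle tree of G. -/
import Mathlib


variable {V : Type}

/-- `u` is an ancestor of `v` (possibly `u = v`) in the rooted tree given by
the parent function `parent`. -/
def Anc (parent : V → V) (u v : V) : Prop := ∃ k : ℕ, parent^[k] v = u

/-- `u` is an elder sibling of `v`: both are non-root vertices with the same
parent, and `u` precedes `v` in the linear order (given by `rank`) on the
children of their common parent. -/
def Elder (parent : V → V) (rank : V → ℕ) (r u v : V) : Prop :=
  u ≠ r ∧ v ≠ r ∧ u ≠ v ∧ parent u = parent v ∧ rank u < rank v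

/-- An uncle tree of `G` rooted at `r`: a spanning tree of `G` (encoded by a
parent function `parent` fixing the root `r`, with each tree edge `{v, parent v}`
an edge of `G`, and a `depth` function witnessing well-foundedness), together
with a linear order on the children of each vertex (encoded by `rank`, which is
injective on each set of siblings), such that for every edge `uv` of `G` that is
not an edge of the tree, one of `u, v` has an elder sibling that is an ancestor
of the other. -/
structure UncleTree (G : SimpleGraph V) (r : V) where
  parent : V → V
  rank : V → ℕ
  depth : V → ℕ
  parent_root : parent r = r
  adj_parent : ∀ v, v ≠ r → G.Adj v (parent v)
  depth_root : depth r = 0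
  depth_parent : ∀ v, v ≠ r → depth v = depth (parent v) + 1
  rank_injOn : ∀ u v, u ≠ r → v ≠ r → parent u = parent v → rank u = rank v → u = v
  uncle : ∀ u v, G.Adj u v → parent u = v ∨ parent v = u ∨
      (∃ w, Elder parent rank r w u ∧ Anc parent w v) ∨
      (∃ w, Elder parent rank r w v ∧ Anc parent w u)

section UncleConstruction

variable (G : SimpleGraph V) (r : V)

/-- Position of the earliest (w.r.t. an initial segment `g` of the ordering)
neighbour of `u`. -/
noncomputable def uNf (k : ℕ) (g : ∀ j, j < k → V) (u : V) : ℕ :=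
  sInf {j | ∃ h : j < k, G.Adj (g j h) u}

/-- `u` is a candidate for the next vertex: unvisited, with a visited neighbour. -/
def uCand (k : ℕ) (g : ∀ j, j < k → V) (u : V) : Prop :=
  (∀ j (h : j < k), g j h ≠ u) ∧ ∃ j, ∃ h : j < k, G.Adj (g j h) u

open Classical in
/-- Next vertex: a candidate maximizing the position of its earliest visited
neighbour (or `r` if there is none). -/
noncomputable def uStep (k : ℕ) (g : ∀ j, j < k → V) : V :=
  if hC : ∃ u, uCand G k g u ∧ ∀ u', uCand G k g u' → uNf G k g u' ≤ uNf G k g u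
  then hC.choose else r

/-- The greedy ordering of the vertices. -/
noncomputable def uSeq (k : ℕ) : V :=
  uStep G r k (fun j hj => uSeq j)
termination_by k
decreasing_by exact hj

lemma uSeq_eq (k : ℕ) : uSeq G r k = uStep G r k (fun j _ => uSeq G r j) := by
  rw [uSeq]

lemma uNf_le (k : ℕ) (g : ∀ j, j < k → V) (u : V) : uNf G k g u ≤ k := by
  unfold uNf
  rcases Set.eq_empty_or_nonempty {j | ∃ h : j < k, G.Adj (g j h) u} with h | h
  · rw [h, Nat.sInf_empty]; exact Nat.zero_le k
  · obtain ⟨h', -⟩ := Nat.sInf_mem h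
    exact le_of_lt h'

lemma uStep_spec (k : ℕ) (g : ∀ j, j < k → V) (hex : ∃ u, uCand G k g u) :
    uCand G k g (uStep G r k g) ∧
      ∀ u', uCand G k g u' → uNf G k g u' ≤ uNf G k g (uStep G r k g) := by
  have hb : BddAbove (uNf G k g '' setOf (uCand G k g)) := by
    refine ⟨k, ?_⟩
    rintro x ⟨u, -, rfl⟩
    exact uNf_le G k g u
  have hne : (uNf G k g '' setOf (uCand G k g)).Nonempty :=
    ⟨uNf G k g hex.choose, ⟨hex.choose, hex.choose_spec, rfl⟩⟩
  obtain ⟨umax, hum, hEq⟩ := Nat.sSup_mem hne hb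
  have hC : ∃ u, uCand G k g u ∧ ∀ u', uCand G k g u' → uNf G k g u' ≤ uNf G k g u :=
    ⟨umax, hum, fun u' hu' => hEq ▸ le_csSup hb ⟨u', hu', rfl⟩⟩
  unfold uStep
  rw [dif_pos hC]
  exact hC.choose_spec

/-- Candidate predicate along the actual sequence. -/
def uCnd (k : ℕ) (u : V) : Prop := uCand G k (fun j _ => uSeq G r j) u

noncomputable def uMn (k : ℕ) (u : V) : ℕ := uNf G k (fun j _ => uSeq G r j) u

lemma uCnd_iff (k : ℕ) (u : V) :
    uCnd G r k u ↔ (∀ j < k, uSeq G r j ≠ u) ∧ ∃ j < k, G.Adj (uSeq G r j) u := by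
  unfold uCnd uCand
  simp [exists_prop]

lemma uMn_eq (k : ℕ) (u : V) :
    uMn G r k u = sInf {j | j < k ∧ G.Adj (uSeq G r j) u} := by
  unfold uMn uNf
  congr 1
  ext j
  exact exists_prop

lemma uSeq_spec (k : ℕ) (hex : ∃ u, uCnd G r k u) :
    uCnd G r k (uSeq G r k) ∧
      ∀ u', uCnd G r k u' → uMn G r k u' ≤ uMn G r k (uSeq G r k) := by
  have h := uStep_spec G r k (fun j _ => uSeq G r j) hex
  rw [← uSeq_eq] at h
  exact h

lemma uSeq_zero : uSeq G r 0 = r := by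
  rw [uSeq_eq]
  unfold uStep
  rw [dif_neg]
  rintro ⟨u, ⟨-, j, hj, -⟩, -⟩
  exact Nat.not_lt_zero j hj

lemma walk_cross {S : Set V} {a b : V} (w : G.Walk a b) (ha : a ∈ S) (hb : b ∉ S) :
    ∃ x ∈ S, ∃ y, y ∉ S ∧ G.Adj x y := by
  induction w with
  | nil => exact absurd ha hb
  | @cons u c d h p ih =>
    by_cases hc : c ∈ S
    · exact ih hc hb
    · exact ⟨u, ha, c, hc, h⟩

lemma uSeq_good [Fintype V] (hG : G.Connected) :
    ∀ k, k < Fintype.card V →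
      (∀ j < k, uSeq G r j ≠ uSeq G r k) ∧ (k ≠ 0 → ∃ u, uCnd G r k u) := by
  intro k
  induction k using Nat.strong_induction_on with
  | _ k ih =>
    intro hk
    rcases Nat.eq_zero_or_pos k with rfl | hk0
    · exact ⟨fun j hj => absurd hj (Nat.not_lt_zero j), fun h => absurd rfl h⟩
    · have hact : ∃ u, uCnd G r k u := by
        classical
        have hinj : Set.InjOn (uSeq G r) ↑(Finset.range k) := by
          intro x hx y hy hxy
          simp only [Finset.coe_range, Set.mem_Iio] at hx hy
          by_contra hne
          rcases Nat.lt_or_ge x y with h | h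
          · exact (ih y hy (hy.trans hk)).1 x h hxy
          · have h' : y < x := lt_of_le_of_ne h (Ne.symm hne)
            exact (ih x hx (hx.trans hk)).1 y h' hxy.symm
        have hcard : ((Finset.range k).image (uSeq G r)).card = k := by
          rw [Finset.card_image_of_injOn hinj, Finset.card_range]
        obtain ⟨v, hv⟩ : ∃ v, v ∉ (Finset.range k).image (uSeq G r) := by
          by_contra hall
          push_neg at hall
          have hsub : (Finset.univ : Finset V) ⊆ (Finset.range k).image (uSeq G r) :=
            fun v _ => hall v
          have := Finset.card_le_card hsub
          rw [hcard, Finset.card_univ] at this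
          omega
        have hrS : r ∈ {x | ∃ j < k, uSeq G r j = x} := ⟨0, hk0, uSeq_zero G r⟩
        have hvS : v ∉ {x | ∃ j < k, uSeq G r j = x} := by
          rintro ⟨j, hj, rfl⟩
          exact hv (Finset.mem_image.mpr ⟨j, Finset.mem_range.mpr hj, rfl⟩)
        obtain ⟨w⟩ := hG.preconnected r v
        obtain ⟨x, hx, y, hy, hxy⟩ := walk_cross G w hrS hvS
        refine ⟨y, (uCnd_iff G r k y).mpr ⟨?_, ?_⟩⟩
        · intro j hj hj'
          exact hy ⟨j, hj, hj'⟩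
        · obtain ⟨j, hj, rfl⟩ := hx
          exact ⟨j, hj, hxy⟩
      refine ⟨?_, fun _ => hact⟩
      have h := (uSeq_spec G r k hact).1
      rw [uCnd_iff] at h
      exact h.1

lemma uSeq_ne [Fintype V] (hG : G.Connected) {j k : ℕ} (hjk : j < k)
    (hk : k < Fintype.card V) : uSeq G r j ≠ uSeq G r k :=
  (uSeq_good G r hG k hk).1 j hjk

lemma uActive [Fintype V] (hG : G.Connected) {k : ℕ} (h0 : k ≠ 0)
    (hk : k < Fintype.card V) : ∃ u, uCnd G r k u :=
  (uSeq_good G r hG k hk).2 h0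

lemma uSurj [Fintype V] (hG : G.Connected) (v : V) :
    ∃ k, k < Fintype.card V ∧ uSeq G r k = v := by
  classical
  have hinj : Set.InjOn (uSeq G r) ↑(Finset.range (Fintype.card V)) := by
    intro x hx y hy hxy
    simp only [Finset.coe_range, Set.mem_Iio] at hx hy
    by_contra hne
    rcases Nat.lt_or_ge x y with h | h
    · exact uSeq_ne G r hG h hy hxy
    · exact uSeq_ne G r hG (lt_of_le_of_ne h (Ne.symm hne)) hx hxy.symm
  have himg : (Finset.range (Fintype.card V)).image (uSeq G r) = Finset.univ :=
    Finset.eq_univ_of_card _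
      (by rw [Finset.card_image_of_injOn hinj, Finset.card_range])
  have hv : v ∈ (Finset.range (Fintype.card V)).image (uSeq G r) := by
    rw [himg]; exact Finset.mem_univ v
  obtain ⟨k, hk, hk2⟩ := Finset.mem_image.mp hv
  exact ⟨k, Finset.mem_range.mp hk, hk2⟩

/-- Position of a vertex in the ordering. -/
noncomputable def uPos (v : V) : ℕ := sInf {k | uSeq G r k = v}

lemma uSeq_pos [Fintype V] (hG : G.Connected) (v : V) : uSeq G r (uPos G r v) = v := by
  obtain ⟨k, -, hk2⟩ := uSurj G r hG v
  exact Nat.sInf_mem (⟨k, hk2⟩ : Set.Nonempty {k | uSeq G r k = v})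

lemma uPos_lt [Fintype V] (hG : G.Connected) (v : V) : uPos G r v < Fintype.card V := by
  obtain ⟨k, hk, hk2⟩ := uSurj G r hG v
  exact lt_of_le_of_lt (Nat.sInf_le hk2) hk

lemma uPos_seq [Fintype V] (hG : G.Connected) {k : ℕ} (hk : k < Fintype.card V) :
    uPos G r (uSeq G r k) = k := by
  have h1 : uPos G r (uSeq G r k) ≤ k := Nat.sInf_le rfl
  rcases eq_or_lt_of_le h1 with h | h
  · exact h
  · exact absurd (uSeq_pos G r hG (uSeq G r k)) (uSeq_ne G r hG h hk)

lemma uPos_r : uPos G r r = 0 :=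
  Nat.le_zero.mp (Nat.sInf_le (uSeq_zero G r))

/-- Index of the parent of the `k`-th vertex. -/
noncomputable def uPIdx (k : ℕ) : ℕ := uMn G r k (uSeq G r k)

lemma uPIdx_eq (k : ℕ) :
    uPIdx G r k = sInf {j | j < k ∧ G.Adj (uSeq G r j) (uSeq G r k)} :=
  uMn_eq G r k (uSeq G r k)

lemma uPIdx_lt {k : ℕ} (h : 0 < k) : uPIdx G r k < k := by
  rw [uPIdx_eq]
  rcases Set.eq_empty_or_nonempty {j | j < k ∧ G.Adj (uSeq G r j) (uSeq G r k)} with hs | hs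
  · rw [hs, Nat.sInf_empty]; exact h
  · exact (Nat.sInf_mem hs).1

lemma uPIdx_mem [Fintype V] (hG : G.Connected) {k : ℕ} (h0 : k ≠ 0)
    (hk : k < Fintype.card V) :
    uPIdx G r k < k ∧ G.Adj (uSeq G r (uPIdx G r k)) (uSeq G r k) := by
  have h := (uSeq_spec G r k (uActive G r hG h0 hk)).1
  rw [uCnd_iff] at h
  obtain ⟨j, hj, hadj⟩ := h.2
  rw [uPIdx_eq]
  exact Nat.sInf_mem
    (⟨j, hj, hadj⟩ : Set.Nonempty {j | j < k ∧ G.Adj (uSeq G r j) (uSeq G r k)})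

lemma uPIdx_le {k j : ℕ} (hj : j < k) (hadj : G.Adj (uSeq G r j) (uSeq G r k)) :
    uPIdx G r k ≤ j := by
  rw [uPIdx_eq]
  exact Nat.sInf_le ⟨hj, hadj⟩

lemma uPIdx_mono [Fintype V] (hG : G.Connected) {i k : ℕ} (hik : uPIdx G r i < k)
    (hki : k < i) (hi : i < Fintype.card V) : uPIdx G r i ≤ uPIdx G r k := by
  have hk0 : k ≠ 0 := by omega
  have hkn : k < Fintype.card V := hki.trans hi
  have hi0 : i ≠ 0 := by omega
  have hpadj : G.Adj (uSeq G r (uPIdx G r i)) (uSeq G r i) := (uPIdx_mem G r hG hi0 hi).2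
  have hci : uCnd G r k (uSeq G r i) := by
    rw [uCnd_iff]
    exact ⟨fun j hj => uSeq_ne G r hG (hj.trans hki) hi, ⟨uPIdx G r i, hik, hpadj⟩⟩
  have h1 : uMn G r k (uSeq G r i) ≤ uMn G r k (uSeq G r k) :=
    (uSeq_spec G r k (uActive G r hG hk0 hkn)).2 _ hci
  have h2 : uMn G r k (uSeq G r i) = uPIdx G r i := by
    rw [uMn_eq]
    apply le_antisymm
    · exact Nat.sInf_le ⟨hik, hpadj⟩
    · have hne : {j | j < k ∧ G.Adj (uSeq G r j) (uSeq G r i)}.Nonempty :=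
        ⟨uPIdx G r i, hik, hpadj⟩
      obtain ⟨hj, hadj⟩ := Nat.sInf_mem hne
      exact uPIdx_le G r (hj.trans hki) hadj
  rw [h2] at h1
  exact h1

/-- The parent function. -/
noncomputable def uPar (v : V) : V :=
  if uPos G r v = 0 then r else uSeq G r (uPIdx G r (uPos G r v))

lemma uPar_seq [Fintype V] (hG : G.Connected) {k : ℕ} (h0 : k ≠ 0)
    (hk : k < Fintype.card V) : uPar G r (uSeq G r k) = uSeq G r (uPIdx G r k) := by
  unfold uPar
  rw [uPos_seq G r hG hk, if_neg h0]

lemma uElderAnc [Fintype V] (hG : G.Connected) :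
    ∀ k i, i < Fintype.card V → uPIdx G r i < k → k < i →
      ∃ m, uPIdx G r m = uPIdx G r i ∧ uPIdx G r i < m ∧ m < i ∧
        ∃ t, (uPar G r)^[t] (uSeq G r k) = uSeq G r m := by
  intro k
  induction k using Nat.strong_induction_on with
  | _ k ih =>
    intro i hi hik hki
    have hmono := uPIdx_mono G r hG hik hki hi
    rcases eq_or_lt_of_le hmono with heq | hlt
    · exact ⟨k, heq.symm, hik, hki, 0, rfl⟩
    · have hk0 : 0 < k := by omega
      have hpk : uPIdx G r k < k := uPIdx_lt G r hk0
      obtain ⟨m, hm1, hm2, hm3, t, ht⟩ := ih (uPIdx G r k) hpk i hi hlt (hpk.trans hki)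
      refine ⟨m, hm1, hm2, hm3, t + 1, ?_⟩
      rw [Function.iterate_succ_apply, uPar_seq G r hG (by omega) (hki.trans hi), ht]

lemma uHalf [Fintype V] (hG : G.Connected) {u v : V} (hadj : G.Adj u v)
    (hlt : uPos G r v < uPos G r u) :
    uPar G r u = v ∨ ∃ w, Elder (uPar G r) (uPos G r) r w u ∧ Anc (uPar G r) w v := by
  have hi : uPos G r u < Fintype.card V := uPos_lt G r hG u
  have hi0 : uPos G r u ≠ 0 := by omega
  have hsu : uSeq G r (uPos G r u) = u := uSeq_pos G r hG u
  have hsv : uSeq G r (uPos G r v) = v := uSeq_pos G r hG v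
  have hadj' : G.Adj (uSeq G r (uPos G r v)) (uSeq G r (uPos G r u)) := by
    rw [hsu, hsv]; exact hadj.symm
  have hple : uPIdx G r (uPos G r u) ≤ uPos G r v := uPIdx_le G r hlt hadj'
  rcases eq_or_lt_of_le hple with heq | hplt
  · left
    rw [← hsu, uPar_seq G r hG hi0 hi, heq, hsv]
  · obtain ⟨m, hm1, hm2, hm3, t, ht⟩ := uElderAnc G r hG (uPos G r v) (uPos G r u) hi hplt hlt
    have hmn : m < Fintype.card V := hm3.trans hi
    refine Or.inr ⟨uSeq G r m, ⟨?_, ?_, ?_, ?_, ?_⟩, ⟨t, ?_⟩⟩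
    · intro h
      have h0 : uPos G r (uSeq G r m) = 0 := by rw [h, uPos_r]
      rw [uPos_seq G r hG hmn] at h0
      omega
    · intro h
      rw [h, uPos_r] at hi0
      exact hi0 rfl
    · rw [← hsu]
      exact uSeq_ne G r hG hm3 hi
    · rw [← hsu, uPar_seq G r hG (by omega) hmn, uPar_seq G r hG hi0 hi, hm1]
    · rw [uPos_seq G r hG hmn]
      exact hm3
    · rw [← hsv]
      exact ht

/-- Depth of the `k`-th vertex. -/
noncomputable def uDep (k : ℕ) : ℕ :=
  if h : k = 0 then 0 else uDep (uPIdx G r k) + 1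
termination_by k
decreasing_by exact uPIdx_lt G r (Nat.pos_of_ne_zero h)

lemma uDep_eq (k : ℕ) :
    uDep G r k = if k = 0 then 0 else uDep G r (uPIdx G r k) + 1 := by
  rw [uDep]
  simp

end UncleConstruction

/-- Every finite connected simple graph `G` has, for every vertex
`r`, a spanning tree rooted at `r` with a linear order on the children of each
vertex which is an uncle tree of `G`. -/
theorem exists_uncleTree [Fintype V] (G : SimpleGraph V) (hG : G.Connected) (r : V) :
    Nonempty (UncleTree G r) := by
  refine ⟨⟨uPar G r, uPos G r, fun v => uDep G r (uPos G r v), ?_, ?_, ?_, ?_, ?_, ?_⟩⟩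
  · unfold uPar
    rw [uPos_r, if_pos rfl]
  · intro v hv
    have hv0 : uPos G r v ≠ 0 := by
      intro h
      apply hv
      rw [← uSeq_pos G r hG v, h, uSeq_zero]
    have h := (uPIdx_mem G r hG hv0 (uPos_lt G r hG v)).2
    rw [uSeq_pos G r hG v] at h
    unfold uPar
    rw [if_neg hv0]
    exact h.symm
  · show uDep G r (uPos G r r) = 0
    rw [uPos_r, uDep_eq, if_pos rfl]
  · intro v hv
    have hv0 : uPos G r v ≠ 0 := by
      intro h
      apply hv
      rw [← uSeq_pos G r hG v, h, uSeq_zero]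
    have hpar : uPar G r v = uSeq G r (uPIdx G r (uPos G r v)) := by
      unfold uPar
      rw [if_neg hv0]
    have hpp : uPos G r (uPar G r v) = uPIdx G r (uPos G r v) := by
      rw [hpar, uPos_seq G r hG
        ((uPIdx_lt G r (Nat.pos_of_ne_zero hv0)).trans (uPos_lt G r hG v))]
    show uDep G r (uPos G r v) = uDep G r (uPos G r (uPar G r v)) + 1
    rw [hpp]
    conv_lhs => rw [uDep_eq, if_neg hv0]
  · intro u v _ _ _ h
    rw [← uSeq_pos G r hG u, ← uSeq_pos G r hG v, h]
  · intro u v hadj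
    have hne : uPos G r u ≠ uPos G r v := by
      intro h
      apply G.ne_of_adj hadj
      rw [← uSeq_pos G r hG u, ← uSeq_pos G r hG v, h]
    rcases lt_or_gt_of_ne hne with h | h
    · rcases uHalf G r hG hadj.symm h with h1 | h1
      · exact Or.inr (Or.inl h1)
      · exact Or.inr (Or.inr (Or.inr h1))
    · rcases uHalf G r hG hadj h with h1 | h1
      · exact Or.inl h1
      · exact Or.inr (Or.inr (Or.inl h1))
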